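/- arXiv:2601.16947 — 2 statements merged into one kernel-verified Lean document; each statement's English description precedes it below -/
import Mathlib

section
/- Let I, J be intervals in a poset P and let f : C(I) → C(J) be a morphism of P-modules. Then the family of components f = {f_p}_{p∈P} is consistent: f_p = f_q whenever p and q lie in the same poset-connected component of I ∩ J, and f_p = 0 for every p ∉ I ∩ J. -/
open CategoryTheory
open scoped Classical ENNReal NNReal

set_option linter.unusedSectionVars false
set_option linter.unusedVariables false

/-! ## Posets, intervals, flows -/

variable {P : Type} [PartialOrder P]

/-- A subset of a poset is poset-convex if it contains every point between two of its points. -/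
def PosetConvex (I : Set P) : Prop :=
  ∀ ⦃p q r : P⦄, p ∈ I → q ∈ I → p ≤ r → r ≤ q → r ∈ I

/-- A subset of a poset is poset-connected if any two of its points are joined by a
zigzag path inside the subset. -/
def PosetConnected (I : Set P) : Prop :=
  ∀ p ∈ I, ∀ q ∈ I,
    Relation.ReflTransGen (fun a b => b ∈ I ∧ (a ≤ b ∨ b ≤ a)) p q

/-- An interval in a poset is a poset-convex and poset-connected subset. -/
def IsInterval (I : Set P) : Prop := PosetConvex I ∧ PosetConnected I

/-- `Q` is a poset-connected component of `U`: a poset-connected subset of `U`, maximal with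
respect to inclusion among poset-connected subsets of `U`. -/
def IsPosetComponent (U Q : Set P) : Prop :=
  Q ⊆ U ∧ PosetConnected Q ∧
    ∀ Q' : Set P, Q' ⊆ U → PosetConnected Q' → Q ⊆ Q' → Q' = Q

/-- A subset `Q` of `I ∩ J` is `(I,J)`-valid. -/
def IsValid (I J Q : Set P) : Prop :=
  ∀ p ∈ Q, (∀ q ∈ I, q ≤ p → q ∈ J) ∧ (∀ r ∈ J, p ≤ r → r ∈ I)

/-- An `ℝ`-flow on a poset. -/
structure RFlow (P : Type) [PartialOrder P] where
  Ω : ℝ → P → P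
  mono : ∀ t : ℝ, Monotone (Ω t)
  mono_param : ∀ {t s : ℝ}, t ≤ s → ∀ p : P, Ω t p ≤ Ω s p
  add : ∀ t s : ℝ, ∀ p : P, Ω (t + s) p = Ω t (Ω s p)
  zero : ∀ p : P, Ω 0 p = p

/-- The `t`-shift `I(t)` of a subset of a poset with an `ℝ`-flow. -/
def RFlow.shiftSet (Φ : RFlow P) (I : Set P) (t : ℝ) : Set P := {p : P | Φ.Ω t p ∈ I}

lemma RFlow.self_le (Φ : RFlow P) {t : ℝ} (ht : 0 ≤ t) (p : P) : p ≤ Φ.Ω t p := by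
  have h := Φ.mono_param ht p
  rwa [Φ.zero] at h

lemma RFlow.self_le_twice (Φ : RFlow P) {t : ℝ} (ht : 0 ≤ t) (p : P) :
    p ≤ Φ.Ω t (Φ.Ω t p) :=
  (Φ.self_le ht p).trans (Φ.self_le ht _)

lemma RFlow.omega_neg_omega (Φ : RFlow P) (t : ℝ) (p : P) : Φ.Ω (-t) (Φ.Ω t p) = p := by
  have h := Φ.add (-t) t p
  rw [neg_add_cancel, Φ.zero] at h
  exact h.symm

lemma RFlow.omega_omega_neg (Φ : RFlow P) (t : ℝ) (p : P) : Φ.Ω t (Φ.Ω (-t) p) = p := by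
  have h := Φ.add t (-t) p
  rw [add_neg_cancel, Φ.zero] at h
  exact h.symm

lemma RFlow.posetConvex_shiftSet (Φ : RFlow P) {I : Set P} (hI : PosetConvex I) (t : ℝ) :
    PosetConvex (Φ.shiftSet I t) := by
  intro p q r hp hq hpr hrq
  exact hI hp hq (Φ.mono t hpr) (Φ.mono t hrq)

lemma RFlow.posetConnected_shiftSet (Φ : RFlow P) {I : Set P} (hI : PosetConnected I) (t : ℝ) :
    PosetConnected (Φ.shiftSet I t) := by
  intro p hp q hq
  have h := hI _ hp _ hq
  have h2 := Relation.ReflTransGen.lift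
    (p := fun a b : P => b ∈ Φ.shiftSet I t ∧ (a ≤ b ∨ b ≤ a)) (fun x : P => Φ.Ω (-t) x)
    (fun a b (hab : b ∈ I ∧ (a ≤ b ∨ b ≤ a)) => ⟨show Φ.Ω t (Φ.Ω (-t) b) ∈ I by rw [Φ.omega_omega_neg]; exact hab.1,
      hab.2.imp (fun h' => Φ.mono (-t) h') (fun h' => Φ.mono (-t) h')⟩) _ _ h
  simpa only [Function.onFun, Φ.omega_neg_omega] using h2

lemma RFlow.isInterval_shiftSet (Φ : RFlow P) {I : Set P} (hI : IsInterval I) (t : ℝ) :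
    IsInterval (Φ.shiftSet I t) :=
  ⟨Φ.posetConvex_shiftSet hI.1 t, Φ.posetConnected_shiftSet hI.2 t⟩

lemma RFlow.shiftSet_nonempty (Φ : RFlow P) {I : Set P} (hI : I.Nonempty) (t : ℝ) :
    (Φ.shiftSet I t).Nonempty := by
  obtain ⟨x, hx⟩ := hI
  exact ⟨Φ.Ω (-t) x, show Φ.Ω t (Φ.Ω (-t) x) ∈ I by rw [Φ.omega_omega_neg]; exact hx⟩

/-! ## Characteristic (interval) persistence modules -/

variable (K : Type) [Field K]

/-- The pointwise value of the characteristic module of `I`, as a submodule of `K`. -/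
noncomputable def charSub (I : Set P) (p : P) : Submodule K K :=
  if p ∈ I then ⊤ else ⊥

lemma charSub_eq_top {I : Set P} {p : P} (hp : p ∈ I) : charSub K I p = ⊤ := if_pos hp

lemma charSub_eq_bot {I : Set P} {p : P} (hp : p ∉ I) : charSub K I p = ⊥ := if_neg hp

lemma charElt_eq_zero {I : Set P} {p : P} (hp : p ∉ I) (x : ↥(charSub K I p)) : x = 0 := by
  exact Subtype.ext ((Submodule.eq_bot_iff _).mp (charSub_eq_bot K hp) (x : K) x.2)

/-- The structure maps of the characteristic module of `I`. -/
noncomputable def charMap (I : Set P) (p q : P) :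
    ↥(charSub K I p) →ₗ[K] ↥(charSub K I q) :=
  if h : p ∈ I ∧ q ∈ I then
    { toFun := fun x => ⟨(x : K), by rw [charSub_eq_top K h.2]; exact Submodule.mem_top⟩
      map_add' := fun x y => rfl
      map_smul' := fun c x => rfl }
  else 0

lemma charMap_id (I : Set P) (p : P) : charMap K I p p = LinearMap.id := by
  by_cases hp : p ∈ I
  · simp only [charMap, dif_pos (And.intro hp hp)]
    rfl
  · ext x
    rw [charElt_eq_zero K hp x]
    simp

lemma charMap_comp {I : Set P} (hI : PosetConvex I) {p q r : P} (hpq : p ≤ q) (hqr : q ≤ r) :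
    (charMap K I q r).comp (charMap K I p q) = charMap K I p r := by
  by_cases hp : p ∈ I
  · by_cases hr : r ∈ I
    · have hq : q ∈ I := hI hp hr hpq hqr
      ext x
      simp only [charMap, dif_pos (And.intro hp hq), dif_pos (And.intro hq hr),
        dif_pos (And.intro hp hr), LinearMap.comp_apply, LinearMap.coe_mk, AddHom.coe_mk]
    · ext x
      exact congrArg Subtype.val
        ((charElt_eq_zero K hr ((charMap K I q r).comp (charMap K I p q) x)).trans
          (charElt_eq_zero K hr (charMap K I p r x)).symm)
  · ext x
    rw [charElt_eq_zero K hp x]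
    simp

/-- The characteristic persistence module `C(I)` of a poset-convex subset `I`. -/
noncomputable def charMod (I : Set P) (hI : PosetConvex I) : P ⥤ ModuleCat K where
  obj p := ModuleCat.of K ↥(charSub K I p)
  map {p q} h := ModuleCat.ofHom (charMap K I p q)
  map_id p := ModuleCat.hom_ext (charMap_id K I p)
  map_comp {p q r} h1 h2 := ModuleCat.hom_ext (charMap_comp K hI (leOfHom h1) (leOfHom h2)).symm

/-- The zero persistence module, realized as the characteristic module of the empty interval. -/
noncomputable def zeroPMod : P ⥤ ModuleCat K :=
  charMod K (∅ : Set P) (fun _ _ _ hp _ _ _ => absurd hp (Set.notMem_empty _))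

/-! ## Barcodes and interval-decomposable modules -/

/-- A barcode over a poset: a multiset of nonempty intervals, encoded as an indexed family. -/
structure Barcode (P : Type) [PartialOrder P] where
  ι : Type
  B : ι → Set P
  interval : ∀ a : ι, IsInterval (B a)
  nonempty : ∀ a : ι, (B a).Nonempty

/-- The interval-decomposable module `⊕_{a} C(B a)` associated to a barcode. -/
noncomputable def bcMod (D : Barcode P) : P ⥤ ModuleCat K where
  obj p := ModuleCat.of K (Π₀ a : D.ι, ↥(charSub K (D.B a) p))
  map {p q} h := ModuleCat.ofHom (DFinsupp.mapRange.linearMap (fun a => charMap K (D.B a) p q))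
  map_id p := by
    apply ModuleCat.hom_ext
    have h : (fun a : D.ι => charMap K (D.B a) p p)
        = fun a : D.ι => (LinearMap.id : ↥(charSub K (D.B a) p) →ₗ[K] ↥(charSub K (D.B a) p)) := by
      funext a; exact charMap_id K (D.B a) p
    show DFinsupp.mapRange.linearMap (fun a => charMap K (D.B a) p p) = LinearMap.id
    rw [h, DFinsupp.mapRange.linearMap_id]
  map_comp {p q r} h1 h2 := by
    apply ModuleCat.hom_ext
    have h : (fun a : D.ι => charMap K (D.B a) p r)
        = fun a : D.ι => (charMap K (D.B a) q r).comp (charMap K (D.B a) p q) := by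
      funext a
      exact (charMap_comp K (D.interval a).1 (leOfHom h1) (leOfHom h2)).symm
    show DFinsupp.mapRange.linearMap (fun a => charMap K (D.B a) p r) = _
    rw [h, DFinsupp.mapRange.linearMap_comp]
    rfl

/-- `M` is interval-decomposable with barcode `D`. -/
def IsDecompositionOf (D : Barcode P) (M : P ⥤ ModuleCat K) : Prop :=
  Nonempty (M ≅ bcMod K D)

/-- The shift of a barcode along a flow. -/
noncomputable def Barcode.shift (D : Barcode P) (Φ : RFlow P) (t : ℝ) : Barcode P where
  ι := D.ι
  B a := Φ.shiftSet (D.B a) t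
  interval a := Φ.isInterval_shiftSet (D.interval a) t
  nonempty a := Φ.shiftSet_nonempty (D.nonempty a) t

/-! ## Shifts of modules, interleavings, distances -/

/-- The shift `M(t)` of a persistence module along a flow. -/
noncomputable def Pshift (Φ : RFlow P) (t : ℝ) (M : P ⥤ ModuleCat K) : P ⥤ ModuleCat K :=
  (Φ.mono t).functor ⋙ M

/-- The ordered pair `(M, N)` is left `ε`-interleaved. -/
noncomputable def LeftInterleaved (Φ : RFlow P) {ε : ℝ} (hε : 0 ≤ ε)
    (M N : P ⥤ ModuleCat K) : Prop :=
  ∃ (f : M ⟶ Pshift K Φ ε N) (g : N ⟶ Pshift K Φ ε M),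
    ∀ p : P, f.app p ≫ g.app (Φ.Ω ε p) = M.map (homOfLE (Φ.self_le_twice hε p))

/-- `M` and `N` are `ε`-interleaved. -/
noncomputable def Interleaved (Φ : RFlow P) {ε : ℝ} (hε : 0 ≤ ε)
    (M N : P ⥤ ModuleCat K) : Prop :=
  ∃ (f : M ⟶ Pshift K Φ ε N) (g : N ⟶ Pshift K Φ ε M),
    (∀ p : P, f.app p ≫ g.app (Φ.Ω ε p) = M.map (homOfLE (Φ.self_le_twice hε p))) ∧
    (∀ p : P, g.app p ≫ f.app (Φ.Ω ε p) = N.map (homOfLE (Φ.self_le_twice hε p)))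

/-- The interleaving distance between two persistence modules. -/
noncomputable def dI (Φ : RFlow P) (M N : P ⥤ ModuleCat K) : ℝ≥0∞ :=
  ⨅ (ε : NNReal) (_ : Interleaved K Φ ε.coe_nonneg M N), (ε : ℝ≥0∞)

/-- An interval `I` is `t`-trivial if the transition morphism `C(I) → C(I(t))` vanishes. -/
noncomputable def IsTrivialIv (Φ : RFlow P) {t : ℝ} (ht : 0 ≤ t)
    (I : Set P) (hI : PosetConvex I) : Prop :=
  ∀ p : P, (charMod K I hI).map (homOfLE (Φ.self_le ht p)) = 0

/-- An `ε`-correspondence between two barcodes. -/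
noncomputable def IsCorrespondence (Φ : RFlow P) {ε : ℝ} (hε : 0 ≤ ε)
    (DM DN : Barcode P) (σ : Set (DM.ι × DN.ι)) : Prop :=
  (∀ ab ∈ σ, Interleaved K Φ hε
      (charMod K (DM.B ab.1) (DM.interval ab.1).1) (charMod K (DN.B ab.2) (DN.interval ab.2).1)) ∧
  (∀ a : DM.ι, (∀ b : DN.ι, (a, b) ∉ σ) →
      Interleaved K Φ hε (charMod K (DM.B a) (DM.interval a).1) (zeroPMod K)) ∧
  (∀ b : DN.ι, (∀ a : DM.ι, (a, b) ∉ σ) →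
      Interleaved K Φ hε (zeroPMod K) (charMod K (DN.B b) (DN.interval b).1))

/-- An `ε`-matching between two barcodes. -/
noncomputable def IsMatching (Φ : RFlow P) {ε : ℝ} (hε : 0 ≤ ε)
    (DM DN : Barcode P) (σ : Set (DM.ι × DN.ι)) : Prop :=
  IsCorrespondence K Φ hε DM DN σ ∧
  (∀ a b b', (a, b) ∈ σ → (a, b') ∈ σ → b = b') ∧
  (∀ a a' b, (a, b) ∈ σ → (a', b) ∈ σ → a = a')

/-- The Hausdorff distance between (modules with) barcodes `DM`, `DN`. -/
noncomputable def dH (Φ : RFlow P) (DM DN : Barcode P) : ℝ≥0∞ :=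
  ⨅ (ε : NNReal) (_ : ∃ σ : Set (DM.ι × DN.ι), IsCorrespondence K Φ ε.coe_nonneg DM DN σ),
    (ε : ℝ≥0∞)

/-- The bottleneck distance between (modules with) barcodes `DM`, `DN`. -/
noncomputable def dB (Φ : RFlow P) (DM DN : Barcode P) : ℝ≥0∞ :=
  ⨅ (ε : NNReal) (_ : ∃ σ : Set (DM.ι × DN.ι), IsMatching K Φ ε.coe_nonneg DM DN σ),
    (ε : ℝ≥0∞)


/-- The underlying scalar in `K` of an element of a pointwise value of a characteristic
module. -/
def charVal {I : Set P} {p : P} (x : ↥(charSub K I p)) : K := x.val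

/-- A canonical element of `charSub K I p`: `1` if `p ∈ I`, else `0`. -/
noncomputable def charOne (I : Set P) (p : P) : ↥(charSub K I p) :=
  if h : p ∈ I then ⟨1, by rw [charSub_eq_top K h]; exact Submodule.mem_top⟩ else 0

lemma charOne_val {I : Set P} {p : P} (hp : p ∈ I) : (charOne K I p).val = 1 := by
  simp [charOne, dif_pos hp]

lemma charMap_charOne {I : Set P} {p q : P} (hp : p ∈ I) (hq : q ∈ I) :
    charMap K I p q (charOne K I p) = charOne K I q := by
  apply Subtype.ext
  simp [charMap, dif_pos (And.intro hp hq), charOne_val K hp, charOne_val K hq]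

lemma charVal_charMap {J : Set P} {p q : P} (hp : p ∈ J) (hq : q ∈ J)
    (z : ↥(charSub K J p)) : charVal K (charMap K J p q z) = charVal K z := by
  simp [charMap, dif_pos (And.intro hp hq), charVal]

/-- the components of any morphism of interval modules form a consistent
family: they agree (as scalars) on each poset-connected component of `I ∩ J` and vanish
outside `I ∩ J`. -/
theorem morphism_is_consistent (I J : Set P) (hI : IsInterval I) (hJ : IsInterval J)
    (f : charMod K I hI.1 ⟶ charMod K J hJ.1) :
    (∀ Q : Set P, IsPosetComponent (I ∩ J) Q → ∀ p ∈ Q, ∀ q ∈ Q,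
      ∀ (x : ↥(charSub K I p)) (y : ↥(charSub K I q)), charVal K x = charVal K y →
        charVal K (f.app p x) = charVal K (f.app q y)) ∧
    (∀ p : P, p ∉ I ∩ J → f.app p = 0) := by
  -- the scalar of the morphism at a point
  set c : P → K := fun p => charVal K (f.app p (charOne K I p)) with hc
  have hval : ∀ p, p ∈ I → ∀ x : ↥(charSub K I p),
      charVal K (f.app p x) = charVal K x * c p := by
    intro p hp x
    have hx : x = charVal K x • charOne K I p := by
      apply Subtype.ext
      simp [charVal, charOne_val K hp]
    conv_lhs => rw [hx]
    refine (congrArg (charVal K) ((f.app p).hom.map_smul (charVal K x) (charOne K I p))).trans ?_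
    rfl
  have hstep : ∀ p q : P, p ≤ q → p ∈ I ∩ J → q ∈ I ∩ J → c p = c q := by
    intro p q hpq hp hq
    have hnat := f.naturality (homOfLE hpq)
    have h := LinearMap.congr_fun (congrArg ModuleCat.Hom.hom hnat) (charOne K I p)
    have h' : (f.app q) (charMap K I p q (charOne K I p))
        = charMap K J p q ((f.app p) (charOne K I p)) := h
    rw [charMap_charOne K hp.1 hq.1] at h'
    have := congrArg (charVal K) h'
    replace this := this.trans (charVal_charMap K hp.2 hq.2 _)
    exact this.symm
  constructor
  · intro Q hQ p hp q hq x y hxy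
    have hQsub := hQ.1
    have hpI : p ∈ I := (hQsub hp).1
    have hqI : q ∈ I := (hQsub hq).1
    have hcpq : c p = c q := by
      have hzig := hQ.2.1 p hp q hq
      have key : ∀ r : P,
          Relation.ReflTransGen (fun a b => b ∈ Q ∧ (a ≤ b ∨ b ≤ a)) p r →
          r ∈ Q ∧ c p = c r := by
        intro r hr
        induction hr with
        | refl => exact ⟨hp, rfl⟩
        | tail hab hbc ih =>
          rename_i b r' _
          refine ⟨hbc.1, ih.2.trans ?_⟩
          rcases hbc.2 with hle | hle
          · exact hstep _ _ hle (hQsub ih.1) (hQsub hbc.1)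
          · exact (hstep _ _ hle (hQsub hbc.1) (hQsub ih.1)).symm
      exact (key q hzig).2
    rw [hval p hpI x, hval q hqI y, hxy, hcpq]
  · intro p hp
    apply ModuleCat.hom_ext
    apply LinearMap.ext
    intro x
    by_cases hpI : p ∈ I
    · have hpJ : p ∉ J := fun hpJ => hp ⟨hpI, hpJ⟩
      exact charElt_eq_zero K hpJ _
    · rw [charElt_eq_zero K hpI x]
      exact ((f.app p).hom.map_zero).trans (LinearMap.zero_apply _).symm
end

section
/- Let I, J be intervals in a poset P, let {Q_a}_{a∈A} be the interval components of I ∩ J, and let f = {f_p : C(I)_p → C(J)_p}_{p∈P} be a consistent family of linear maps with associated scalars ω_a(f). Then f defines a morphism of P-modules C(I) → C(J) if and only if every component Q_a with ω_a(f) ≠ 0 is (I,J)-valid. -/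
open CategoryTheory
open scoped Classical ENNReal NNReal

set_option linter.unusedSectionVars false
set_option linter.unusedVariables false

/-! ## Posets, intervals, flows -/

variable {P : Type} [PartialOrder P]

/-! ## Characteristic (interval) persistence modules -/

variable (K : Type) [Field K]

/-! ### Auxiliary lemmas for Statement 7 -/

/-- The zigzag relation inside a set. -/
def zrel (U : Set P) (a b : P) : Prop := b ∈ U ∧ (a ≤ b ∨ b ≤ a)

/-- The zigzag component of `p` inside `U`. -/
def zcomp (U : Set P) (p : P) : Set P := {x | Relation.ReflTransGen (zrel U) p x}

lemma zcomp_self (U : Set P) (p : P) : p ∈ zcomp U p := Relation.ReflTransGen.refl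

lemma zcomp_mem {U : Set P} {p x : P} (hp : p ∈ U) (hx : x ∈ zcomp U p) : x ∈ U := by
  induction hx with
  | refl => exact hp
  | tail _ h ih => exact h.1

lemma zcomp_subset {U : Set P} {p : P} (hp : p ∈ U) : zcomp U p ⊆ U :=
  fun _ hx => zcomp_mem hp hx

lemma zrel_reverse {U : Set P} {p x : P} (hp : p ∈ U)
    (h : Relation.ReflTransGen (zrel U) p x) : Relation.ReflTransGen (zrel U) x p := by
  induction h with
  | refl => exact Relation.ReflTransGen.refl
  | tail hpb hbc ih =>
    exact Relation.ReflTransGen.head ⟨zcomp_mem hp hpb, hbc.2.symm⟩ ih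

lemma zcomp_lift {U : Set P} {p x y : P} (hx : x ∈ zcomp U p)
    (h : Relation.ReflTransGen (zrel U) x y) :
    Relation.ReflTransGen (zrel (zcomp U p)) x y := by
  induction h with
  | refl => exact Relation.ReflTransGen.refl
  | tail hxb hbc ih =>
    exact ih.tail ⟨Relation.ReflTransGen.trans hx (hxb.tail hbc), hbc.2⟩

lemma zcomp_connected {U : Set P} {p : P} (hp : p ∈ U) : PosetConnected (zcomp U p) := by
  intro x hx y hy
  exact zcomp_lift hx ((zrel_reverse hp hx).trans hy)

lemma zcomp_isComponent {U : Set P} {p : P} (hp : p ∈ U) :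
    IsPosetComponent U (zcomp U p) := by
  refine ⟨zcomp_subset hp, zcomp_connected hp, ?_⟩
  intro Q' hQ'U hQ'conn hsub
  refine Set.Subset.antisymm (fun y hy => ?_) hsub
  have hpQ' : p ∈ Q' := hsub (zcomp_self U p)
  exact Relation.ReflTransGen.mono (p := zrel U) (fun a b (hab : b ∈ Q' ∧ (a ≤ b ∨ b ≤ a)) => (⟨hQ'U hab.1, hab.2⟩ : zrel U a b)) _ _ (hQ'conn p hpQ' y hy)

lemma zcomp_step {U : Set P} {p q : P} (hp : p ∈ U) (hq : q ∈ U) (h : p ≤ q ∨ q ≤ p) :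
    q ∈ zcomp U p :=
  Relation.ReflTransGen.single ⟨hq, h⟩

lemma charMap_val {I : Set P} {p q : P} (hp : p ∈ I) (hq : q ∈ I)
    (x : ↥(charSub K I p)) : ((charMap K I p q x : K)) = (x : K) := by
  simp only [charMap, dif_pos (And.intro hp hq), LinearMap.coe_mk, AddHom.coe_mk]

lemma charMap_zero_of {I : Set P} {p q : P} (h : ¬(p ∈ I ∧ q ∈ I)) :
    charMap K I p q = 0 := dif_neg h

/-- The element `1` of `charSub K I p` for `p ∈ I`. -/
noncomputable def oneElt {I : Set P} {p : P} (hp : p ∈ I) : ↥(charSub K I p) :=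
  ⟨1, by rw [charSub_eq_top K hp]; exact Submodule.mem_top⟩

lemma smul_oneElt {I : Set P} {p : P} (hp : p ∈ I) (x : ↥(charSub K I p)) :
    x = (x : K) • oneElt K hp := by
  apply Subtype.ext
  rw [SetLike.val_smul]
  simp [oneElt]

lemma f_ne_zero_iff {I J : Set P} (f : ∀ p : P, ↥(charSub K I p) →ₗ[K] ↥(charSub K J p))
    {p : P} (hp : p ∈ I) : f p ≠ 0 ↔ ((f p (oneElt K hp) : K)) ≠ 0 := by
  constructor
  · intro hf
    intro hv
    apply hf
    apply LinearMap.ext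
    intro x
    rw [smul_oneElt K hp x, map_smul]
    have : f p (oneElt K hp) = 0 := Subtype.ext hv
    rw [this, smul_zero, LinearMap.zero_apply]
  · intro hv hf
    apply hv
    rw [hf]
    rfl

/-- a consistent family of linear maps defines a morphism
`C(I) → C(J)` iff every interval component of `I ∩ J` on which the associated scalar is
nonzero is `(I,J)`-valid. -/
theorem consistent_family_is_morphism_iff (I J : Set P)
    (hI : IsInterval I) (hJ : IsInterval J)
    (f : ∀ p : P, ↥(charSub K I p) →ₗ[K] ↥(charSub K J p))
    (hconst : ∀ Q : Set P, IsPosetComponent (I ∩ J) Q → ∀ p ∈ Q, ∀ q ∈ Q,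
      ∀ (x : ↥(charSub K I p)) (y : ↥(charSub K I q)), (x : K) = (y : K) →
        ((f p x : K) = (f q y : K)))
    (hzero : ∀ p : P, p ∉ I ∩ J → f p = 0) :
    (∀ p q : P, p ≤ q →
        (f q).comp (charMap K I p q) = (charMap K J p q).comp (f p)) ↔
    (∀ Q : Set P, IsPosetComponent (I ∩ J) Q → (∃ p ∈ Q, f p ≠ 0) → IsValid I J Q) := by
  constructor
  · rintro hnat Q hQ ⟨p₀, hp₀Q, hfp₀⟩ p hpQ
    have hp₀IJ : p₀ ∈ I ∩ J := hQ.1 hp₀Q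
    have hpIJ : p ∈ I ∩ J := hQ.1 hpQ
    have hval : ((f p (oneElt K hpIJ.1) : K)) = ((f p₀ (oneElt K hp₀IJ.1) : K)) :=
      hconst Q hQ p hpQ p₀ hp₀Q _ _ rfl
    have hvp : ((f p (oneElt K hpIJ.1) : K)) ≠ 0 := by
      rw [hval]; exact (f_ne_zero_iff K f hp₀IJ.1).mp hfp₀
    constructor
    · intro q hqI hqp
      by_contra hqJ
      have hfq : f q = 0 := hzero q (fun h => hqJ h.2)
      have hone : charMap K I q p (oneElt K hqI) = oneElt K hpIJ.1 :=
        Subtype.ext (charMap_val K hqI hpIJ.1 _)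
      have h3 : f p (oneElt K hpIJ.1) = 0 := by
        rw [← hone, ← LinearMap.comp_apply, hnat q p hqp, LinearMap.comp_apply, hfq]
        simp
      exact hvp (by simp [h3])
    · intro r hrJ hpr
      by_contra hrI
      have hL : ((f r).comp (charMap K I p r)) (oneElt K hpIJ.1) = 0 := by
        rw [LinearMap.comp_apply, charMap_zero_of K (fun h => hrI h.2)]
        simp
      have hR : (((charMap K J p r).comp (f p)) (oneElt K hpIJ.1) : K)
          = ((f p (oneElt K hpIJ.1) : K)) := by
        rw [LinearMap.comp_apply]; exact charMap_val K hpIJ.2 hrJ _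
      rw [hnat p r hpr] at hL
      rw [hL] at hR
      exact hvp (by simpa using hR.symm)
  · intro hvalid p q hpq
    apply LinearMap.ext
    intro x
    apply Subtype.ext
    simp only [LinearMap.comp_apply]
    by_cases hpI : p ∈ I
    · by_cases hqI : q ∈ I
      · by_cases hpJ : p ∈ J
        · by_cases hqJ : q ∈ J
          · have hqc : q ∈ zcomp (I ∩ J) p :=
              zcomp_step ⟨hpI, hpJ⟩ ⟨hqI, hqJ⟩ (Or.inl hpq)
            have hcomp := zcomp_isComponent (U := I ∩ J) ⟨hpI, hpJ⟩
            have hx : ((charMap K I p q x : K)) = (x : K) := charMap_val K hpI hqI x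
            have hkey := hconst _ hcomp q hqc p (zcomp_self _ p) (charMap K I p q x) x hx
            rw [charMap_val K hpJ hqJ (f p x)]
            exact hkey
          · have hfq : f q = 0 := hzero q (fun h => hqJ h.2)
            rw [hfq, charMap_zero_of K (I := J) (fun h => hqJ h.2)]
            simp
        · have hfp : f p = 0 := hzero p (fun h => hpJ h.2)
          have hfq : f q = 0 := by
            by_cases hqJ : q ∈ J
            · by_contra hfq
              have hv := hvalid _ (zcomp_isComponent (U := I ∩ J) ⟨hqI, hqJ⟩)
                ⟨q, zcomp_self _ q, hfq⟩
              exact hpJ ((hv q (zcomp_self _ q)).1 p hpI hpq)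
            · exact hzero q (fun h => hqJ h.2)
          rw [hfp, hfq]
          simp
      · rw [charMap_zero_of K (I := I) (fun h => hqI h.2)]
        have hfpz : f p x = 0 ∨ charMap K J p q = 0 := by
          by_cases hqJ : q ∈ J
          · by_cases hpJ : p ∈ J
            · left
              by_cases hfp : f p = 0
              · rw [hfp]; rfl
              · exfalso
                have hv := hvalid _ (zcomp_isComponent (U := I ∩ J) ⟨hpI, hpJ⟩)
                  ⟨p, zcomp_self _ p, hfp⟩
                exact hqI ((hv p (zcomp_self _ p)).2 q hqJ hpq)
            · left
              rw [hzero p (fun h => hpJ h.2)]; rfl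
          · right
            exact charMap_zero_of K (fun h => hqJ h.2)
        rcases hfpz with h | h <;> rw [h] <;> simp
    · have hx0 : x = 0 := charElt_eq_zero K hpI x
      rw [hx0]
      simp
end
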